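/- Let H ∈ Sym_d with ‖H‖_op ≤ L_G, let g, v ∈ ℝ^d with ‖v‖ ≤ Δ/2, and set m(w) = ⟨g,w⟩ + (1/2)⟨w,Hw⟩, r = -∇m(v). Suppose ⟨r, Hr⟩ ≤ 0 and u = v + s'r with s' ≥ 0 chosen so that ‖u‖ = Δ. Then m(v) - m(u) ≥ (Δ/2)·(s'‖r‖/Δ)·‖r‖ ≥ (Δ/4)‖r‖; in particular s' ≥ Δ/(2‖r‖) (assuming r ≠ 0) and m(u) - m(v) ≤ -s'‖r‖². -/

import Mathlib

open RealInnerProductSpace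

/-- Decrease of a boundary-constrained gradient step on the quadratic model in a
direction of nonpositive curvature (Case 3 in the proof of Lemma `cauchy_step`). -/
theorem boundary_gradient_step_nonpositive_curvature
    {d : ℕ} (H : EuclideanSpace ℝ (Fin d) →L[ℝ] EuclideanSpace ℝ (Fin d))
    (hsymm : ∀ a b, ⟪H a, b⟫ = ⟪a, H b⟫)
    (L_G : ℝ) (hH : ‖H‖ ≤ L_G)
    (g v r u : EuclideanSpace ℝ (Fin d)) (Δ : ℝ) (hΔ : 0 < Δ) (hv : ‖v‖ ≤ Δ / 2)
    (m : EuclideanSpace ℝ (Fin d) → ℝ)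
    (hm : ∀ w, m w = ⟪g, w⟫ + (1 / 2) * ⟪w, H w⟫)
    (hr : r = -(H v + g))
    (hcurv : ⟪r, H r⟫ ≤ 0)
    (s' : ℝ) (hs' : 0 ≤ s') (hu : u = v + s' • r) (huΔ : ‖u‖ = Δ) :
    (Δ / 2 * (s' * ‖r‖ / Δ) * ‖r‖ ≤ m v - m u) ∧
    (Δ / 4 * ‖r‖ ≤ Δ / 2 * (s' * ‖r‖ / Δ) * ‖r‖) ∧
    (r ≠ 0 → Δ / (2 * ‖r‖) ≤ s') ∧
    (m u - m v ≤ -(s' * ‖r‖ ^ 2)) := by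
  have h2 : ⟪g, r⟫ + ⟪H v, r⟫ = -‖r‖ ^ 2 := by
    rw [← inner_add_left]
    have hgv : g + H v = -r := by rw [hr]; abel
    rw [hgv, inner_neg_left, real_inner_self_eq_norm_sq]
  have hvr : ⟪v, H r⟫ = ⟪H v, r⟫ := (hsymm v r).symm
  have key : m u - m v = -(s' * ‖r‖ ^ 2) + s' ^ 2 / 2 * ⟪r, H r⟫ := by
    rw [hm, hm, hu]
    simp only [map_add, map_smul, inner_add_left, inner_add_right,
      real_inner_smul_left, real_inner_smul_right, hvr]
    have hrv : ⟪r, H v⟫ = ⟪H v, r⟫ := real_inner_comm _ _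
    rw [hrv]
    nlinarith [h2]
  have hsr : Δ / 2 ≤ s' * ‖r‖ := by
    have h1 : Δ ≤ ‖v‖ + s' * ‖r‖ := by
      calc Δ = ‖u‖ := huΔ.symm
        _ ≤ ‖v‖ + ‖s' • r‖ := by rw [hu]; exact norm_add_le _ _
        _ = ‖v‖ + s' * ‖r‖ := by rw [norm_smul, Real.norm_eq_abs, abs_of_nonneg hs']
    linarith
  have hr0 : 0 ≤ ‖r‖ := norm_nonneg r
  have hgoal4 : m u - m v ≤ -(s' * ‖r‖ ^ 2) := by nlinarith [sq_nonneg s']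
  have heq : Δ / 2 * (s' * ‖r‖ / Δ) * ‖r‖ = s' * ‖r‖ ^ 2 / 2 := by
    field_simp
  refine ⟨?_, ?_, ?_, hgoal4⟩
  · rw [heq]; nlinarith
  · rw [heq]; nlinarith
  · intro hrne
    have hrpos : 0 < ‖r‖ := norm_pos_iff.mpr hrne
    rw [div_le_iff₀ (by positivity)]
    nlinarith
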